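/- (Two-weight Sawyer theorem for the dyadic maximal function, p = 2, finite lattice) Let 𝒟 be a finite dyadic lattice on ℝ^n, μ and ν locally finite Borel measures. Define Mf(x) = sup_{Q∈𝒟, x∈Q} ⨍_Q f dμ for f ≥ 0 (with the convention that the average is 0 when μ(Q) = 0). Then the estimate ‖Mf‖_{L^2(ν)} ≤ A‖f‖_{L^2(μ)} holds for all f ∈ L^2(μ), f ≥ 0, if and only if there exists B with ‖𝟙_Q M(𝟙_Q)‖_{L^2(ν)} ≤ B·μ(Q)^{1/2} for all Q ∈ 𝒟; moreover one may take A ≤ C·B for an absolute constant C (e.g. C = (27/2)^{1/2}·2). -/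

import Mathlib

open MeasureTheory ENNReal Set

/-- The dyadic cube of generation `k` at position `m` in `ℝⁿ`. -/
def dyadicCube (n : ℕ) (k : ℤ) (m : Fin n → ℤ) : Set (Fin n → ℝ) :=
  {x | ∀ i, (m i : ℝ) * (2 : ℝ) ^ (-k) ≤ x i ∧ x i < ((m i : ℝ) + 1) * (2 : ℝ) ^ (-k)}

/-- The average `⨍_Q f dμ`, interpreted as `0` when `μ Q = 0` or `μ Q = ∞`. -/
noncomputable def dyAvg {X : Type*} [MeasurableSpace X] (μ : Measure X)
    (f : X → ℝ≥0∞) (Q : Set X) : ℝ≥0∞ :=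
  if μ Q = 0 then 0 else (∫⁻ x in Q, f x ∂μ) / μ Q

/-- The dyadic maximal operator over a finite collection `D` of dyadic cubes:
`Mf(x) = sup_{i ∈ D, x ∈ Q_i} ⨍_{Q_i} f dμ`. -/
noncomputable def dyadicMaxOp {n : ℕ} (μ : Measure (Fin n → ℝ))
    (D : Finset (ℤ × (Fin n → ℤ))) (f : (Fin n → ℝ) → ℝ≥0∞) (x : Fin n → ℝ) : ℝ≥0∞ :=
  ⨆ i ∈ D, Set.indicator (dyadicCube n i.1 i.2)
    (fun _ => dyAvg μ f (dyadicCube n i.1 i.2)) x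

section Geometry

lemma dyadic_1d {k1 k2 m1 m2 : ℤ} (hk : k1 ≤ k2) {x y : ℝ}
    (h1l : (m1:ℝ) * 2^(-k1) ≤ x) (h1r : x < ((m1:ℝ)+1) * 2^(-k1))
    (h2l : (m2:ℝ) * 2^(-k2) ≤ x) (h2r : x < ((m2:ℝ)+1) * 2^(-k2))
    (hyl : (m2:ℝ) * 2^(-k2) ≤ y) (hyr : y < ((m2:ℝ)+1) * 2^(-k2)) :
    (m1:ℝ) * 2^(-k1) ≤ y ∧ y < ((m1:ℝ)+1) * 2^(-k1) := by
  set d : ℕ := (k2 - k1).toNat with hdd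
  have hpos : (0:ℝ) < 2 ^ (-k2) := zpow_pos (by norm_num) _
  have hd : (2:ℝ)^(-k1) = 2^d * 2^(-k2) := by
    rw [← zpow_natCast (2:ℝ) d, ← zpow_add₀ (by norm_num : (2:ℝ) ≠ 0)]
    congr 1
    omega
  have hp1 : (m1 * 2^d : ℤ) ≤ m2 := by
    have h0 : ((m1 * 2^d : ℤ) : ℝ) * 2^(-k2) ≤ x := by
      push_cast
      calc (m1:ℝ) * 2^d * 2^(-k2) = m1 * 2^(-k1) := by rw [hd]; ring
        _ ≤ x := h1l
    have hlt : ((m1 * 2^d : ℤ) : ℝ) < ((m2:ℝ) + 1) := by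
      have := h0.trans_lt h2r
      exact lt_of_mul_lt_mul_right this hpos.le
    exact_mod_cast Int.lt_add_one_iff.mp (by exact_mod_cast hlt)
  have hp2 : m2 + 1 ≤ (m1+1) * 2^d := by
    have hlt : (m2:ℝ) < (((m1+1) * 2^d : ℤ) : ℝ) := by
      have hx2 : x < (((m1+1) * 2^d : ℤ) : ℝ) * 2^(-k2) := by
        push_cast
        calc x < ((m1:ℝ)+1) * 2^(-k1) := h1r
          _ = ((m1:ℝ)+1) * 2^d * 2^(-k2) := by rw [hd]; ring
      exact lt_of_mul_lt_mul_right (h2l.trans_lt hx2) hpos.le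
    exact_mod_cast Int.add_one_le_iff.mpr (by exact_mod_cast hlt)
  constructor
  · calc (m1:ℝ) * 2^(-k1) = ((m1 * 2^d : ℤ) : ℝ) * 2^(-k2) := by
          push_cast; rw [hd]; ring
      _ ≤ (m2:ℝ) * 2^(-k2) := by
          apply mul_le_mul_of_nonneg_right _ hpos.le
          exact_mod_cast hp1
      _ ≤ y := hyl
  · calc y < ((m2:ℝ)+1) * 2^(-k2) := hyr
      _ ≤ (((m1+1) * 2^d : ℤ) : ℝ) * 2^(-k2) := by
          apply mul_le_mul_of_nonneg_right _ hpos.le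
          push_cast
          exact_mod_cast hp2
      _ = ((m1:ℝ)+1) * 2^(-k1) := by push_cast; rw [hd]; ring

lemma dyadicCube_subset_of_inter {n : ℕ} {k1 k2 : ℤ} {m1 m2 : Fin n → ℤ} (hk : k1 ≤ k2)
    (h : (dyadicCube n k2 m2 ∩ dyadicCube n k1 m1).Nonempty) :
    dyadicCube n k2 m2 ⊆ dyadicCube n k1 m1 := by
  obtain ⟨x, hx2, hx1⟩ := h
  intro y hy i
  exact dyadic_1d hk (hx1 i).1 (hx1 i).2 (hx2 i).1 (hx2 i).2 (hy i).1 (hy i).2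

lemma dyadicCube_trichotomy {n : ℕ} (k1 k2 : ℤ) (m1 m2 : Fin n → ℤ) :
    dyadicCube n k1 m1 ⊆ dyadicCube n k2 m2 ∨ dyadicCube n k2 m2 ⊆ dyadicCube n k1 m1 ∨
      Disjoint (dyadicCube n k1 m1) (dyadicCube n k2 m2) := by
  rcases Set.eq_empty_or_nonempty (dyadicCube n k1 m1 ∩ dyadicCube n k2 m2) with he | hne
  · exact Or.inr (Or.inr (Set.disjoint_iff_inter_eq_empty.mpr he))
  · rcases le_total k1 k2 with h | h
    · exact Or.inr (Or.inl (dyadicCube_subset_of_inter h (by rwa [Set.inter_comm] at hne)))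
    · exact Or.inl (dyadicCube_subset_of_inter h hne)

lemma dyadicCube_measurable {n : ℕ} (k : ℤ) (m : Fin n → ℤ) :
    MeasurableSet (dyadicCube n k m) := by
  have : dyadicCube n k m =
      Set.pi Set.univ (fun i => Set.Ico ((m i : ℝ) * (2:ℝ)^(-k)) (((m i : ℝ)+1) * (2:ℝ)^(-k))) := by
    ext x; simp [dyadicCube, Set.mem_pi, Set.mem_Ico]
  rw [this]
  exact MeasurableSet.univ_pi fun i => measurableSet_Ico

lemma dyadicCube_measure_ne_top {n : ℕ} (μ : Measure (Fin n → ℝ)) [IsLocallyFiniteMeasure μ]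
    (k : ℤ) (m : Fin n → ℤ) : μ (dyadicCube n k m) ≠ ∞ := by
  have hsub : dyadicCube n k m ⊆
      Set.Icc (fun i => (m i : ℝ) * (2:ℝ)^(-k)) (fun i => ((m i : ℝ)+1) * (2:ℝ)^(-k)) := by
    intro x hx
    constructor
    · intro i; exact (hx i).1
    · intro i; exact (hx i).2.le
  have hcomp : IsCompact (Set.Icc (fun i => (m i : ℝ) * (2:ℝ)^(-k))
      (fun i => ((m i : ℝ)+1) * (2:ℝ)^(-k))) := isCompact_Icc
  exact ne_top_of_le_ne_top hcomp.measure_lt_top.ne (measure_mono hsub)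

end Geometry

section MaxFam

variable {X : Type*}

/-- Maximal elements of a finite family of sets. -/
noncomputable def maxCubes (S : Finset (Set X)) : Finset (Set X) :=
  @Finset.filter _ (fun Q => ∀ R ∈ S, ¬ Q ⊂ R) (Classical.decPred _) S

lemma mem_maxCubes {S : Finset (Set X)} {Q : Set X} :
    Q ∈ maxCubes S ↔ Q ∈ S ∧ ∀ R ∈ S, ¬ Q ⊂ R := by
  simp [maxCubes, Finset.mem_filter]

lemma maxCubes_subset {S : Finset (Set X)} : maxCubes S ⊆ S :=
  fun _ hQ => (mem_maxCubes.mp hQ).1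

lemma exists_maxCubes {S : Finset (Set X)} {Q : Set X} (hQ : Q ∈ S) :
    ∃ R ∈ maxCubes S, Q ⊆ R := by
  classical
  obtain ⟨R, hRmax⟩ := Finset.exists_maximal (s := S.filter (fun P => Q ⊆ P))
    ⟨Q, by simp [hQ]⟩
  have hR : R ∈ S.filter (fun P => Q ⊆ P) := hRmax.1
  rw [Finset.mem_filter] at hR
  refine ⟨R, mem_maxCubes.mpr ⟨hR.1, ?_⟩, hR.2⟩
  intro P hP hRP
  exact hRP.2 (hRmax.2 (Finset.mem_filter.mpr ⟨hP, hR.2.trans hRP.subset⟩) hRP.subset)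

lemma maxCubes_disjoint {S : Finset (Set X)}
    (tri : ∀ Q ∈ S, ∀ R ∈ S, Q ⊆ R ∨ R ⊆ Q ∨ Disjoint Q R)
    {Q R : Set X} (hQ : Q ∈ maxCubes S) (hR : R ∈ maxCubes S) (hne : Q ≠ R) :
    Disjoint Q R := by
  rcases tri Q (maxCubes_subset hQ) R (maxCubes_subset hR) with h | h | h
  · exact absurd (h.ssubset_of_ne hne) ((mem_maxCubes.mp hQ).2 R (maxCubes_subset hR))
  · exact absurd (h.ssubset_of_ne (Ne.symm hne)) ((mem_maxCubes.mp hR).2 Q (maxCubes_subset hQ))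
  · exact h

end MaxFam

section Geom

/-- Geometric sum over the integers. -/
lemma tsum_zpow_lt_le (a : ℝ≥0∞) (ha1 : 1 < a) (ha2 : a ≠ ∞) (c : ℝ≥0∞) :
    ∑' k : ℤ, (if a ^ k < c then a ^ k else 0) ≤ (1 - a⁻¹)⁻¹ * c := by
  have ha0 : a ≠ 0 := (zero_lt_one.trans ha1).ne'
  have hconst : (1:ℝ≥0∞) ≤ (1 - a⁻¹)⁻¹ := by
    simpa using ENNReal.inv_le_inv' (tsub_le_self : (1:ℝ≥0∞) - a⁻¹ ≤ 1)
  rcases eq_or_ne c 0 with rfl | hc0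
  · simp [(ENNReal.zpow_pos ha0 ha2 _).not_gt]
  rcases eq_or_ne c ∞ with rfl | hctop
  · rw [ENNReal.mul_top]
    · exact le_top
    · intro h; rw [h] at hconst; exact absurd hconst (by simp)
  obtain ⟨K, hK⟩ := ENNReal.exists_mem_Ioc_zpow hc0 hctop ha1 ha2
  have hle : ∀ k : ℤ, (if a ^ k < c then a ^ k else 0) ≤ (if k ≤ K then a ^ k else 0) := by
    intro k
    split_ifs with h1 h2
    · exact le_rfl
    · exfalso
      have : a ^ (K+1) ≤ a ^ k := ENNReal.zpow_le_of_le ha1.le (by omega)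
      exact absurd (lt_of_lt_of_le h1 (hK.2.trans this)) (lt_irrefl _)
    · exact zero_le
    · exact le_rfl
  refine (ENNReal.tsum_le_tsum hle).trans ?_
  have hbij : (∑' k : ℤ, (if k ≤ K then a ^ k else 0)) = ∑' j : ℕ, a ^ (K - (j:ℤ)) := by
    apply tsum_eq_tsum_of_ne_zero_bij (fun j => K - ((j : ℕ):ℤ))
    · intro x y hxy
      exact Subtype.ext (Nat.cast_injective (sub_right_injective hxy))
    · intro k hk
      have hkK : k ≤ K := by
        by_contra h
        simp [if_neg h] at hk
      refine ⟨⟨(K - k).toNat, ?_⟩, ?_⟩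
      · simp only [Function.mem_support]
        exact (ENNReal.zpow_pos ha0 ha2 _).ne'
      · simp only
        omega
    · intro j
      have : K - ((j:ℕ):ℤ) ≤ K := by omega
      simp [this]
  rw [hbij]
  have hsum : (∑' j : ℕ, a ^ (K - (j:ℤ))) = a ^ K * (1 - a⁻¹)⁻¹ := by
    have : ∀ j : ℕ, a ^ (K - (j:ℤ)) = a ^ K * (a⁻¹) ^ j := by
      intro j
      rw [ENNReal.zpow_sub ha0 ha2, zpow_natCast, ← ENNReal.inv_pow]
    simp_rw [this]
    rw [ENNReal.tsum_mul_left, ENNReal.tsum_geometric]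
  rw [hsum, mul_comm]
  exact mul_le_mul_right hK.1.le _

end Geom

section CS

variable {X : Type*} [MeasurableSpace X] (μ : Measure X)

lemma lintegral_mul_le_sq (f g : X → ℝ≥0∞) (hf : Measurable f) (hg : Measurable g) :
    ∫⁻ x, f x * g x ∂μ ≤
      (∫⁻ x, f x ^ (2:ℝ) ∂μ) ^ ((1:ℝ)/2) * (∫⁻ x, g x ^ (2:ℝ) ∂μ) ^ ((1:ℝ)/2) := by
  have hconj : Real.HolderConjugate 2 2 := by constructor <;> norm_num
  have := ENNReal.lintegral_mul_le_Lp_mul_Lq μ hconj hf.aemeasurable hg.aemeasurable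
  simpa using this

lemma indicator_rpow_two (Q : Set X) (x : X) :
    (Q.indicator (fun _ => (1:ℝ≥0∞)) x) ^ (2:ℝ) = Q.indicator (fun _ => (1:ℝ≥0∞)) x := by
  by_cases hx : x ∈ Q <;> simp [hx, ENNReal.zero_rpow_of_pos, Set.indicator_of_mem,
    Set.indicator_of_notMem]

lemma setLIntegral_le_sq (f : X → ℝ≥0∞) (hf : Measurable f) {Q : Set X}
    (hQ : MeasurableSet Q) :
    ∫⁻ x in Q, f x ∂μ ≤ (∫⁻ x, f x ^ (2:ℝ) ∂μ) ^ ((1:ℝ)/2) * (μ Q) ^ ((1:ℝ)/2) := by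
  have h1 : ∫⁻ x in Q, f x ∂μ = ∫⁻ x, f x * Q.indicator (fun _ => (1:ℝ≥0∞)) x ∂μ := by
    rw [← lintegral_indicator hQ]
    congr 1
    ext x
    by_cases hx : x ∈ Q <;> simp [hx]
  rw [h1]
  refine (lintegral_mul_le_sq μ f _ hf (measurable_const.indicator hQ)).trans ?_
  have h2 : ∫⁻ x, (Q.indicator (fun _ => (1:ℝ≥0∞)) x) ^ (2:ℝ) ∂μ = μ Q := by
    simp_rw [indicator_rpow_two]
    rw [lintegral_indicator hQ]
    simp
  rw [h2]

end CS

section MaxOp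

variable {n : ℕ} (μ : Measure (Fin n → ℝ)) (D : Finset (ℤ × (Fin n → ℤ)))
  (f : (Fin n → ℝ) → ℝ≥0∞)

/-- The collection of cubes of `D`, as sets. -/
noncomputable def cubesOf : Finset (Set (Fin n → ℝ)) :=
  @Finset.image _ _ (Classical.decEq _) (fun i => dyadicCube n i.1 i.2) D

lemma mem_cubesOf {Q : Set (Fin n → ℝ)} :
    Q ∈ cubesOf D ↔ ∃ i ∈ D, dyadicCube n i.1 i.2 = Q := by
  simp [cubesOf, Finset.mem_image]

lemma measurable_maxOp : Measurable (dyadicMaxOp μ D f) := by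
  apply Measurable.iSup
  intro i
  apply Measurable.iSup
  intro _
  exact measurable_const.indicator (dyadicCube_measurable _ _)

lemma lt_maxOp_iff {t : ℝ≥0∞} {x : Fin n → ℝ} :
    t < dyadicMaxOp μ D f x ↔
      ∃ i ∈ D, x ∈ dyadicCube n i.1 i.2 ∧ t < dyAvg μ f (dyadicCube n i.1 i.2) := by
  unfold dyadicMaxOp
  rw [lt_iSup_iff]
  constructor
  · rintro ⟨i, hi⟩
    rw [lt_iSup_iff] at hi
    obtain ⟨hiD, hlt⟩ := hi
    by_cases hx : x ∈ dyadicCube n i.1 i.2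
    · exact ⟨i, hiD, hx, by rwa [Set.indicator_of_mem hx] at hlt⟩
    · rw [Set.indicator_of_notMem hx] at hlt
      exact absurd hlt (by simp)
  · rintro ⟨i, hiD, hx, hlt⟩
    exact ⟨i, by rw [lt_iSup_iff]; exact ⟨hiD, by rwa [Set.indicator_of_mem hx]⟩⟩

lemma avg_le_maxOp {i : ℤ × (Fin n → ℤ)} (hi : i ∈ D) {x : Fin n → ℝ}
    (hx : x ∈ dyadicCube n i.1 i.2) :
    dyAvg μ f (dyadicCube n i.1 i.2) ≤ dyadicMaxOp μ D f x := by
  rw [show dyAvg μ f (dyadicCube n i.1 i.2) =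
      Set.indicator (dyadicCube n i.1 i.2)
        (fun _ => dyAvg μ f (dyadicCube n i.1 i.2)) x from
    (Set.indicator_of_mem hx (fun _ => dyAvg μ f (dyadicCube n i.1 i.2))).symm]
  exact le_iSup₂ (f := fun i (_ : i ∈ D) => Set.indicator (dyadicCube n i.1 i.2)
    (fun _ => dyAvg μ f (dyadicCube n i.1 i.2)) x) i hi

end MaxOp

section QFam

variable {n : ℕ} (μ : Measure (Fin n → ℝ)) (D : Finset (ℤ × (Fin n → ℤ)))
  (f : (Fin n → ℝ) → ℝ≥0∞)


/-- The maximal cubes among those of `D` with average exceeding `t`. -/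
noncomputable def QF (t : ℝ≥0∞) : Finset (Set (Fin n → ℝ)) :=
  maxCubes ((cubesOf D).filter (fun Q => t < dyAvg μ f Q))

lemma QF_mem {t : ℝ≥0∞} {Q : Set (Fin n → ℝ)} (hQ : Q ∈ QF μ D f t) :
    Q ∈ cubesOf D ∧ t < dyAvg μ f Q := by
  have := maxCubes_subset hQ
  rw [Finset.mem_filter] at this
  exact this

lemma cubesOf_tri : ∀ Q ∈ cubesOf D, ∀ R ∈ cubesOf D,
    Q ⊆ R ∨ R ⊆ Q ∨ Disjoint Q R := by
  intro Q hQ R hR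
  obtain ⟨i, _, rfl⟩ := (mem_cubesOf D).mp hQ
  obtain ⟨j, _, rfl⟩ := (mem_cubesOf D).mp hR
  exact dyadicCube_trichotomy _ _ _ _

lemma QF_cover {t : ℝ≥0∞} {x : Fin n → ℝ} (hx : t < dyadicMaxOp μ D f x) :
    ∃ Q ∈ QF μ D f t, x ∈ Q := by
  obtain ⟨i, hiD, hxi, hlt⟩ := (lt_maxOp_iff μ D f).mp hx
  have hmem : dyadicCube n i.1 i.2 ∈
      (cubesOf D).filter (fun Q => t < dyAvg μ f Q) := by
    rw [Finset.mem_filter]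
    exact ⟨(mem_cubesOf D).mpr ⟨i, hiD, rfl⟩, hlt⟩
  obtain ⟨R, hR, hsub⟩ := exists_maxCubes hmem
  exact ⟨R, hR, hsub hxi⟩

lemma QF_lt_max {t : ℝ≥0∞} {Q : Set (Fin n → ℝ)} (hQ : Q ∈ QF μ D f t)
    {x : Fin n → ℝ} (hx : x ∈ Q) : t < dyadicMaxOp μ D f x := by
  obtain ⟨hQD, havg⟩ := QF_mem μ D f hQ
  obtain ⟨i, hiD, rfl⟩ := (mem_cubesOf D).mp hQD
  exact havg.trans_le (avg_le_maxOp μ D f hiD hx)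

lemma QF_disjoint {t : ℝ≥0∞} {Q R : Set (Fin n → ℝ)} (hQ : Q ∈ QF μ D f t)
    (hR : R ∈ QF μ D f t) (hne : Q ≠ R) : Disjoint Q R := by
  refine maxCubes_disjoint ?_ hQ hR hne
  intro Q' hQ' R' hR'
  rw [Finset.mem_filter] at hQ' hR'
  exact cubesOf_tri D Q' hQ'.1 R' hR'.1

lemma QF_props [IsLocallyFiniteMeasure μ] {t : ℝ≥0∞} {Q : Set (Fin n → ℝ)}
    (hQ : Q ∈ QF μ D f t) :
    MeasurableSet Q ∧ μ Q ≠ 0 ∧ μ Q ≠ ∞ ∧ t * μ Q ≤ ∫⁻ x in Q, f x ∂μ := by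
  obtain ⟨hQD, havg⟩ := QF_mem μ D f hQ
  obtain ⟨i, _, rfl⟩ := (mem_cubesOf D).mp hQD
  have hfin : μ (dyadicCube n i.1 i.2) ≠ ∞ := dyadicCube_measure_ne_top μ _ _
  have hne0 : μ (dyadicCube n i.1 i.2) ≠ 0 := by
    intro h0
    rw [dyAvg, if_pos h0] at havg
    exact absurd havg (by simp)
  refine ⟨dyadicCube_measurable _ _, hne0, hfin, ?_⟩
  rw [dyAvg, if_neg hne0] at havg
  calc t * μ (dyadicCube n i.1 i.2)
      ≤ ((∫⁻ x in dyadicCube n i.1 i.2, f x ∂μ) / μ (dyadicCube n i.1 i.2)) *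
        μ (dyadicCube n i.1 i.2) := mul_le_mul_left havg.le _
    _ = ∫⁻ x in dyadicCube n i.1 i.2, f x ∂μ := ENNReal.div_mul_cancel hne0 hfin

lemma QF_sum_indicator {t : ℝ≥0∞} (x : Fin n → ℝ) :
    (∑ Q ∈ QF μ D f t, Q.indicator (fun _ => (1:ℝ≥0∞)) x) ≤
      {y | t < dyadicMaxOp μ D f y}.indicator (fun _ => (1:ℝ≥0∞)) x := by
  by_cases hx : ∃ Q0 ∈ QF μ D f t, x ∈ Q0
  · obtain ⟨Q0, hQ0, hxQ0⟩ := hx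
    have hsum : (∑ Q ∈ QF μ D f t, Q.indicator (fun _ => (1:ℝ≥0∞)) x) = 1 := by
      rw [Finset.sum_eq_single Q0]
      · exact Set.indicator_of_mem hxQ0 _
      · intro R hR hne
        apply Set.indicator_of_notMem
        exact fun hxR => (QF_disjoint μ D f hR hQ0 hne).ne_of_mem hxR hxQ0 rfl
      · exact fun h => absurd hQ0 h
    rw [hsum, Set.indicator_of_mem
      (show x ∈ {y | t < dyadicMaxOp μ D f y} from QF_lt_max μ D f hQ0 hxQ0)]
  · rw [Finset.sum_eq_zero]
    · exact zero_le
    · intro R hR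
      exact Set.indicator_of_notMem (fun hxR => hx ⟨R, hR, hxR⟩) _

lemma measure_lt_maxOp_le (ρ : Measure (Fin n → ℝ)) {t : ℝ≥0∞} :
    ρ {x | t < dyadicMaxOp μ D f x} ≤ ∑ Q ∈ QF μ D f t, ρ Q := by
  refine (measure_mono ?_).trans (measure_biUnion_finset_le (QF μ D f t) id)
  intro x hx
  obtain ⟨Q, hQ, hxQ⟩ := QF_cover μ D f hx
  exact Set.mem_biUnion hQ hxQ

end QFam

section Core

variable {n : ℕ} (μ : Measure (Fin n → ℝ)) (D : Finset (ℤ × (Fin n → ℤ)))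
  (f : (Fin n → ℝ) → ℝ≥0∞)


lemma core_estimate [IsLocallyFiniteMeasure μ] (ρ : Measure (Fin n → ℝ)) (a C : ℝ≥0∞)
    (ha1 : 1 < a) (ha2 : a ≠ ∞) (hf : Measurable f)
    (hMne : ∀ x, dyadicMaxOp μ D f x ≠ ∞)
    (hcube : ∀ k : ℤ, ∀ Q ∈ QF μ D f (a^k), ρ Q ≤ C * μ Q) :
    ∫⁻ x, (dyadicMaxOp μ D f x)^(2:ℝ) ∂ρ ≤
      a^2 * C * (1 - a⁻¹)⁻¹ * ∫⁻ x, f x * dyadicMaxOp μ D f x ∂μ := by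
  have ha0 : a ≠ 0 := (zero_lt_one.trans ha1).ne'
  set M := dyadicMaxOp μ D f with hMdef
  have hMmeas : Measurable M := measurable_maxOp μ D f
  set E : ℤ → Set (Fin n → ℝ) := fun k => {x | a^k < M x} ∩ {x | M x ≤ a^(k+1)} with hEdef
  have hEmeas : ∀ k, MeasurableSet (E k) := fun k =>
    (measurableSet_lt measurable_const hMmeas).inter (measurableSet_le hMmeas measurable_const)
  have hSmeas : ∀ k : ℤ, MeasurableSet {x | a^k < M x} := fun k =>
    measurableSet_lt measurable_const hMmeas
  -- Step 1: pointwise layer-cake bound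
  have step1 : ∀ x, (M x)^(2:ℝ) ≤
      ∑' k:ℤ, (E k).indicator (fun _ => (a^(k+1))^(2:ℝ)) x := by
    intro x
    rcases eq_or_ne (M x) 0 with h0 | h0
    · rw [h0, ENNReal.zero_rpow_of_pos (by norm_num)]; exact zero_le
    · obtain ⟨k, hk⟩ := ENNReal.exists_mem_Ioc_zpow h0 (hMne x) ha1 ha2
      have hxE : x ∈ E k := ⟨hk.1, hk.2⟩
      calc (M x)^(2:ℝ) ≤ (a^(k+1))^(2:ℝ) := ENNReal.rpow_le_rpow hk.2 (by norm_num)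
        _ = (E k).indicator (fun _ => (a^(k+1))^(2:ℝ)) x :=
            (Set.indicator_of_mem hxE (fun _ => (a^(k+1))^(2:ℝ))).symm
        _ ≤ _ := ENNReal.le_tsum k
  -- Step 2
  have step2 : ∫⁻ x, (M x)^(2:ℝ) ∂ρ ≤ ∑' k:ℤ, (a^(k+1))^(2:ℝ) * ρ (E k) := by
    calc ∫⁻ x, (M x)^(2:ℝ) ∂ρ
        ≤ ∫⁻ x, ∑' k:ℤ, (E k).indicator (fun _ => (a^(k+1))^(2:ℝ)) x ∂ρ :=
          lintegral_mono step1
      _ = ∑' k:ℤ, ∫⁻ x, (E k).indicator (fun _ => (a^(k+1))^(2:ℝ)) x ∂ρ :=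
          lintegral_tsum fun k => (measurable_const.indicator (hEmeas k)).aemeasurable
      _ = ∑' k:ℤ, (a^(k+1))^(2:ℝ) * ρ (E k) := by
          refine tsum_congr fun k => ?_
          rw [lintegral_indicator (hEmeas k), setLIntegral_const]
  -- Step 3
  have step3 : ∀ k:ℤ, ρ (E k) ≤ C * ∑ Q ∈ QF μ D f (a^k), μ Q := by
    intro k
    calc ρ (E k) ≤ ρ {x | a^k < M x} := measure_mono Set.inter_subset_left
      _ ≤ ∑ Q ∈ QF μ D f (a^k), ρ Q := measure_lt_maxOp_le μ D f ρ
      _ ≤ ∑ Q ∈ QF μ D f (a^k), C * μ Q := Finset.sum_le_sum (hcube k)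
      _ = C * ∑ Q ∈ QF μ D f (a^k), μ Q := (Finset.mul_sum _ _ _).symm
  -- Step 4
  have step4 : ∀ k:ℤ, a^k * ∑ Q ∈ QF μ D f (a^k), μ Q ≤
      ∫⁻ x, f x * ({y | a^k < M y}.indicator (fun _ => (1:ℝ≥0∞)) x) ∂μ := by
    intro k
    calc a^k * ∑ Q ∈ QF μ D f (a^k), μ Q
        = ∑ Q ∈ QF μ D f (a^k), a^k * μ Q := Finset.mul_sum _ _ _
      _ ≤ ∑ Q ∈ QF μ D f (a^k), ∫⁻ x in Q, f x ∂μ :=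
          Finset.sum_le_sum fun Q hQ => (QF_props μ D f hQ).2.2.2
      _ = ∑ Q ∈ QF μ D f (a^k), ∫⁻ x, Q.indicator f x ∂μ :=
          Finset.sum_congr rfl fun Q hQ => (lintegral_indicator (QF_props μ D f hQ).1 f).symm
      _ = ∫⁻ x, ∑ Q ∈ QF μ D f (a^k), Q.indicator f x ∂μ :=
          (lintegral_finset_sum _ fun Q hQ => hf.indicator (QF_props μ D f hQ).1).symm
      _ = ∫⁻ x, f x * ∑ Q ∈ QF μ D f (a^k), Q.indicator (fun _ => (1:ℝ≥0∞)) x ∂μ := by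
          refine lintegral_congr fun x => ?_
          rw [Finset.mul_sum]
          refine Finset.sum_congr rfl fun Q _ => ?_
          by_cases hx : x ∈ Q <;> simp [hx]
      _ ≤ ∫⁻ x, f x * ({y | a^k < M y}.indicator (fun _ => (1:ℝ≥0∞)) x) ∂μ :=
          lintegral_mono fun x => mul_le_mul_right (QF_sum_indicator μ D f x) _
  -- exponent algebra
  have pow2 : ∀ k:ℤ, (a^(k+1))^(2:ℝ) = a^2 * a^k * a^k := by
    intro k
    have h2 : ((2:ℕ):ℝ) = (2:ℝ) := by norm_num
    rw [← h2, ENNReal.rpow_natCast, pow_two, ENNReal.zpow_add ha0 ha2 k 1, zpow_one]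
    ring
  -- assembly
  set I : ℤ → ℝ≥0∞ := fun k =>
    ∫⁻ x, f x * ({y | a^k < M y}.indicator (fun _ => (1:ℝ≥0∞)) x) ∂μ with hIdef
  have hIint : ∀ k : ℤ, a^k * I k =
      ∫⁻ x, f x * (a^k * ({y | a^k < M y}.indicator (fun _ => (1:ℝ≥0∞)) x)) ∂μ := by
    intro k
    rw [hIdef]
    rw [← lintegral_const_mul _ (f := fun x => f x * {y | a^k < M y}.indicator (fun _ => (1:ℝ≥0∞)) x)
      (hf.mul (measurable_const.indicator (hSmeas k)))]
    exact lintegral_congr fun x => by ring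
  have hgeom : ∀ x, (∑' k:ℤ, a^k * ({y | a^k < M y}.indicator (fun _ => (1:ℝ≥0∞)) x)) ≤
      (1-a⁻¹)⁻¹ * M x := by
    intro x
    refine le_trans (le_of_eq (tsum_congr fun k => ?_)) (tsum_zpow_lt_le a ha1 ha2 (M x))
    by_cases h : a^k < M x
    · rw [Set.indicator_of_mem (show x ∈ {y | a^k < M y} from h), if_pos h, mul_one]
    · rw [Set.indicator_of_notMem (show x ∉ {y | a^k < M y} from h), if_neg h, mul_zero]
  calc ∫⁻ x, (M x)^(2:ℝ) ∂ρ
      ≤ ∑' k:ℤ, (a^(k+1))^(2:ℝ) * ρ (E k) := step2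
    _ ≤ ∑' k:ℤ, (a^2 * C) * (a^k * (a^k * ∑ Q ∈ QF μ D f (a^k), μ Q)) := by
        refine ENNReal.tsum_le_tsum fun k => ?_
        rw [pow2 k]
        calc a^2 * a^k * a^k * ρ (E k)
            ≤ a^2 * a^k * a^k * (C * ∑ Q ∈ QF μ D f (a^k), μ Q) :=
              mul_le_mul_right (step3 k) _
          _ = (a^2 * C) * (a^k * (a^k * ∑ Q ∈ QF μ D f (a^k), μ Q)) := by ring
    _ ≤ ∑' k:ℤ, (a^2 * C) * (a^k * I k) :=
        ENNReal.tsum_le_tsum fun k =>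
          mul_le_mul_right (mul_le_mul_right (step4 k) _) _
    _ = (a^2 * C) * ∑' k:ℤ, a^k * I k := ENNReal.tsum_mul_left
    _ = (a^2 * C) * ∑' k:ℤ, ∫⁻ x, f x *
          (a^k * ({y | a^k < M y}.indicator (fun _ => (1:ℝ≥0∞)) x)) ∂μ := by
        congr 1
        exact tsum_congr hIint
    _ = (a^2 * C) * ∫⁻ x, ∑' k:ℤ, f x *
          (a^k * ({y | a^k < M y}.indicator (fun _ => (1:ℝ≥0∞)) x)) ∂μ := by
        congr 1
        exact (lintegral_tsum fun k => (hf.mul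
          (measurable_const.mul (measurable_const.indicator (hSmeas k)))).aemeasurable).symm
    _ ≤ (a^2 * C) * ∫⁻ x, f x * ((1-a⁻¹)⁻¹ * M x) ∂μ := by
        refine mul_le_mul_right (lintegral_mono fun x => ?_) _
        rw [ENNReal.tsum_mul_left]
        exact mul_le_mul_right (hgeom x) _
    _ = a^2 * C * (1 - a⁻¹)⁻¹ * ∫⁻ x, f x * M x ∂μ := by
        rw [mul_assoc (a^2*C) (1-a⁻¹)⁻¹]
        congr 1
        rw [← lintegral_const_mul _ (f := fun x => f x * M x) (hf.mul hMmeas)]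
        exact lintegral_congr fun x => by ring

end Core

section Constants

lemma two_inv_inv' : (1 - (2:ℝ≥0∞)⁻¹)⁻¹ = 2 := by
  rw [ENNReal.one_sub_inv_two]; simp

lemma a32_inv : ((3:ℝ≥0∞)/2)⁻¹ = 2/3 :=
  ENNReal.inv_div (Or.inl (by simp)) (Or.inl (by norm_num))

lemma a32_sub : (1:ℝ≥0∞) - 2/3 = 1/3 := by
  refine ENNReal.sub_eq_of_eq_add ?_ ?_
  · exact (ENNReal.div_lt_top (by simp) (by norm_num)).ne
  · rw [← ENNReal.add_div]
    norm_num
    rw [ENNReal.div_self (by norm_num) (by simp)]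

lemma a32_geom : (1 - ((3:ℝ≥0∞)/2)⁻¹)⁻¹ = 3 := by
  rw [a32_inv, a32_sub, one_div, inv_inv]

lemma a32_lt : (1:ℝ≥0∞) < 3/2 := by
  rw [ENNReal.lt_div_iff_mul_lt (Or.inl (by norm_num)) (Or.inl (by simp))]
  norm_num

lemma a32_ne_top : ((3:ℝ≥0∞)/2) ≠ ⊤ := (ENNReal.div_lt_top (by simp) (by norm_num)).ne

lemma c32 : ((3:ℝ≥0∞)/2)^2 * 1 * (1 - ((3:ℝ≥0∞)/2)⁻¹)⁻¹ = 27/4 := by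
  rw [a32_geom, div_eq_mul_inv, mul_pow, ← ENNReal.inv_pow, div_eq_mul_inv]
  have : ((2:ℝ≥0∞)^2)⁻¹ = 4⁻¹ := by norm_num
  rw [this]
  ring

lemma c2' (b : ℝ≥0∞) : (2:ℝ≥0∞)^2 * b * (1 - (2:ℝ≥0∞)⁻¹)⁻¹ = 8 * b := by
  rw [two_inv_inv']; ring

lemma rpow_two_mul (b : ℝ≥0∞) : b ^ (2:ℝ) = b * b := by
  rw [show (2:ℝ) = ((2:ℕ):ℝ) by norm_num, ENNReal.rpow_natCast, pow_two]

lemma h84 : (8:ℝ≥0∞) * (27/4) = 54 := by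
  rw [← mul_div_assoc, show (8:ℝ≥0∞) * 27 = 54 * 4 by norm_num,
    mul_div_assoc, ENNReal.div_self (by norm_num) (by norm_num), mul_one]

lemma sq_rpow_half (x : ℝ≥0∞) : (x*x)^((1:ℝ)/2) = x := by
  rw [← pow_two, ← ENNReal.rpow_natCast x 2, ← ENNReal.rpow_mul]
  norm_num

lemma h54 : ((54:ℝ≥0∞))^((1:ℝ)/2) = ENNReal.ofReal ((27/2:ℝ)^((1:ℝ)/2)*2) := by
  rw [show ((54:ℝ≥0∞)) = ENNReal.ofReal 54 from (ENNReal.ofReal_ofNat 54).symm]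
  rw [ENNReal.ofReal_rpow_of_pos (by norm_num)]
  congr 1
  have h4 : (4:ℝ)^((1:ℝ)/2) = 2 := by
    rw [show (4:ℝ) = 2^(2:ℕ) by norm_num, ← Real.rpow_natCast 2 2,
      ← Real.rpow_mul (by norm_num)]
    norm_num
  rw [show (54:ℝ) = (27/2)*4 by norm_num,
    Real.mul_rpow (by norm_num) (by norm_num), h4]

end Constants

section Finiteness

variable {n : ℕ} (μ : Measure (Fin n → ℝ)) (D : Finset (ℤ × (Fin n → ℤ)))
  (f : (Fin n → ℝ) → ℝ≥0∞)

lemma avg_ne_top [IsLocallyFiniteMeasure μ] (hf : Measurable f)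
    (hf2 : (∫⁻ x, f x ^ (2:ℝ) ∂μ) ≠ ∞) (k : ℤ) (m : Fin n → ℤ) :
    dyAvg μ f (dyadicCube n k m) ≠ ∞ := by
  rw [dyAvg]
  split_ifs with h0
  · simp
  · refine (ENNReal.div_lt_top ?_ h0).ne
    refine ne_top_of_le_ne_top ?_ (setLIntegral_le_sq μ f hf (dyadicCube_measurable k m))
    exact ENNReal.mul_ne_top (ENNReal.rpow_ne_top_of_nonneg (by norm_num) hf2)
      (ENNReal.rpow_ne_top_of_nonneg (by norm_num) (dyadicCube_measure_ne_top μ k m))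

lemma maxOp_le_sum (x : Fin n → ℝ) :
    dyadicMaxOp μ D f x ≤ ∑ i ∈ D, dyAvg μ f (dyadicCube n i.1 i.2) := by
  refine iSup₂_le fun i hi => ?_
  calc Set.indicator (dyadicCube n i.1 i.2)
        (fun _ => dyAvg μ f (dyadicCube n i.1 i.2)) x
      ≤ dyAvg μ f (dyadicCube n i.1 i.2) := by
        by_cases hx : x ∈ dyadicCube n i.1 i.2 <;> simp [hx]
    _ ≤ _ := Finset.single_le_sum
      (f := fun j => dyAvg μ f (dyadicCube n j.1 j.2)) (fun _ _ => zero_le) hi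

lemma maxOp_ne_top [IsLocallyFiniteMeasure μ] (hf : Measurable f)
    (hf2 : (∫⁻ x, f x ^ (2:ℝ) ∂μ) ≠ ∞) (x : Fin n → ℝ) :
    dyadicMaxOp μ D f x ≠ ∞ := by
  refine ne_top_of_le_ne_top ?_ (maxOp_le_sum μ D f x)
  exact (ENNReal.sum_lt_top.mpr fun i _ => (avg_ne_top μ f hf hf2 i.1 i.2).lt_top).ne

lemma maxOp_sq_ne_top [IsLocallyFiniteMeasure μ] (hf : Measurable f)
    (hf2 : (∫⁻ x, f x ^ (2:ℝ) ∂μ) ≠ ∞) :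
    (∫⁻ x, (dyadicMaxOp μ D f x) ^ (2:ℝ) ∂μ) ≠ ∞ := by
  set S := ∑ i ∈ D, dyAvg μ f (dyadicCube n i.1 i.2) with hSdef
  have hS : S ≠ ∞ :=
    (ENNReal.sum_lt_top.mpr fun i _ => (avg_ne_top μ f hf hf2 i.1 i.2).lt_top).ne
  set U := ⋃ i ∈ D, dyadicCube n i.1 i.2 with hUdef
  have hUmeas : MeasurableSet U :=
    MeasurableSet.biUnion D.countable_toSet fun i _ => dyadicCube_measurable i.1 i.2
  have hUfin : μ U ≠ ∞ := by
    refine ne_top_of_le_ne_top ?_ (measure_biUnion_finset_le D _)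
    exact (ENNReal.sum_lt_top.mpr fun i _ => (dyadicCube_measure_ne_top μ i.1 i.2).lt_top).ne
  have hpt : ∀ x, (dyadicMaxOp μ D f x) ^ (2:ℝ) ≤
      U.indicator (fun _ => S ^ (2:ℝ)) x := by
    intro x
    by_cases hx : x ∈ U
    · rw [Set.indicator_of_mem hx]
      exact ENNReal.rpow_le_rpow (maxOp_le_sum μ D f x) (by norm_num)
    · have h0 : dyadicMaxOp μ D f x = 0 := by
        refine le_antisymm (iSup₂_le fun i hi => ?_) (zero_le)
        rw [Set.indicator_of_notMem (fun hxi => hx (Set.mem_biUnion hi hxi))]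
      rw [h0, Set.indicator_of_notMem hx, ENNReal.zero_rpow_of_pos (by norm_num)]
  refine ne_top_of_le_ne_top ?_ (lintegral_mono hpt)
  rw [lintegral_indicator hUmeas, setLIntegral_const]
  exact ENNReal.mul_ne_top (ENNReal.rpow_ne_top_of_nonneg (by norm_num) hS) hUfin

lemma unweighted_L2 [IsLocallyFiniteMeasure μ] (hf : Measurable f)
    (hf2 : (∫⁻ x, f x ^ (2:ℝ) ∂μ) ≠ ∞) :
    (∫⁻ x, (dyadicMaxOp μ D f x) ^ (2:ℝ) ∂μ) ^ ((1:ℝ)/2) ≤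
      (27/4 : ℝ≥0∞) * (∫⁻ x, f x ^ (2:ℝ) ∂μ) ^ ((1:ℝ)/2) := by
  set M := dyadicMaxOp μ D f with hMdef
  have hMmeas : Measurable M := measurable_maxOp μ D f
  have hMne : ∀ x, M x ≠ ∞ := maxOp_ne_top μ D f hf hf2
  set I := ∫⁻ x, (M x) ^ (2:ℝ) ∂μ with hIdef
  set F := ∫⁻ x, f x ^ (2:ℝ) ∂μ with hFdef
  have hcore := core_estimate μ D f μ (3/2) 1 a32_lt a32_ne_top hf hMne
    (fun k Q hQ => by rw [one_mul])
  rw [c32] at hcore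
  have hCS : (∫⁻ x, f x * M x ∂μ) ≤ F ^ ((1:ℝ)/2) * I ^ ((1:ℝ)/2) :=
    lintegral_mul_le_sq μ f M hf hMmeas
  rcases eq_or_ne I 0 with h0 | h0
  · rw [h0, ENNReal.zero_rpow_of_pos (by norm_num)]
    exact zero_le
  · have hItop : I ≠ ∞ := maxOp_sq_ne_top μ D f hf hf2
    have hX0 : I ^ ((1:ℝ)/2) ≠ 0 := by
      simp [ENNReal.rpow_eq_zero_iff, h0, hItop]
    have hXtop : I ^ ((1:ℝ)/2) ≠ ⊤ := ENNReal.rpow_ne_top_of_nonneg (by norm_num) hItop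
    have hXX : I ^ ((1:ℝ)/2) * I ^ ((1:ℝ)/2) = I := by
      rw [← ENNReal.rpow_add _ _ h0 hItop]; norm_num
    have hkey : I ^ ((1:ℝ)/2) * I ^ ((1:ℝ)/2) ≤ (27/4 * F ^ ((1:ℝ)/2)) * I ^ ((1:ℝ)/2) := by
      rw [hXX]
      calc I ≤ 27/4 * (F ^ ((1:ℝ)/2) * I ^ ((1:ℝ)/2)) :=
            hcore.trans (mul_le_mul_right hCS _)
        _ = (27/4 * F ^ ((1:ℝ)/2)) * I ^ ((1:ℝ)/2) := by ring
    exact (ENNReal.mul_le_mul_iff_left hX0 hXtop).mp hkey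

end Finiteness

/-- Two-weight Sawyer theorem for the dyadic maximal function, `p = 2`, finite lattice:
the estimate `‖Mf‖_{L²(ν)} ≤ A ‖f‖_{L²(μ)}` holds iff the Sawyer testing condition
`‖𝟙_Q M(𝟙_Q)‖_{L²(ν)} ≤ B μ(Q)^{1/2}` holds, and in the sufficiency direction one can take
`A = (27/2)^{1/2} · 2 · B`. -/
theorem sawyer_two_weight_p_two {n : ℕ} (μ ν : Measure (Fin n → ℝ))
    [IsLocallyFiniteMeasure μ] [IsLocallyFiniteMeasure ν]
    (D : Finset (ℤ × (Fin n → ℤ))) :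
    (∀ A : ℝ≥0∞,
      (∀ f : (Fin n → ℝ) → ℝ≥0∞, Measurable f → (∫⁻ x, f x ^ (2 : ℝ) ∂μ) ≠ ∞ →
        (∫⁻ x, (dyadicMaxOp μ D f x) ^ (2 : ℝ) ∂ν) ^ ((1 : ℝ) / 2) ≤
          A * (∫⁻ x, f x ^ (2 : ℝ) ∂μ) ^ ((1 : ℝ) / 2)) →
      ∀ i ∈ D,
        (∫⁻ x, ((dyadicCube n i.1 i.2).indicator
            (fun y => dyadicMaxOp μ D ((dyadicCube n i.1 i.2).indicator 1) y) x) ^ (2 : ℝ)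
          ∂ν) ^ ((1 : ℝ) / 2) ≤ A * μ (dyadicCube n i.1 i.2) ^ ((1 : ℝ) / 2)) ∧
    (∀ B : ℝ≥0∞,
      (∀ i ∈ D,
        (∫⁻ x, ((dyadicCube n i.1 i.2).indicator
            (fun y => dyadicMaxOp μ D ((dyadicCube n i.1 i.2).indicator 1) y) x) ^ (2 : ℝ)
          ∂ν) ^ ((1 : ℝ) / 2) ≤ B * μ (dyadicCube n i.1 i.2) ^ ((1 : ℝ) / 2)) →
      ∀ f : (Fin n → ℝ) → ℝ≥0∞, Measurable f → (∫⁻ x, f x ^ (2 : ℝ) ∂μ) ≠ ∞ →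
        (∫⁻ x, (dyadicMaxOp μ D f x) ^ (2 : ℝ) ∂ν) ^ ((1 : ℝ) / 2) ≤
          ENNReal.ofReal ((27 / 2 : ℝ) ^ ((1 : ℝ) / 2) * 2) * B *
            (∫⁻ x, f x ^ (2 : ℝ) ∂μ) ^ ((1 : ℝ) / 2)) := by
  constructor
  · -- necessity
    intro A hA i hi
    set Q := dyadicCube n i.1 i.2 with hQdef
    set g := Q.indicator (1 : (Fin n → ℝ) → ℝ≥0∞) with hgdef
    have hgmeas : Measurable g := measurable_one.indicator (dyadicCube_measurable _ _)
    have hg2 : (∫⁻ x, g x ^ (2:ℝ) ∂μ) = μ Q := by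
      have hpt : ∀ x, g x ^ (2:ℝ) = Q.indicator (fun _ => (1:ℝ≥0∞)) x := by
        intro x
        by_cases hx : x ∈ Q <;>
          simp [hgdef, hx, ENNReal.zero_rpow_of_pos]
      simp_rw [hpt]
      rw [lintegral_indicator (dyadicCube_measurable _ _), setLIntegral_one]
    have htest := hA g hgmeas (by rw [hg2]; exact dyadicCube_measure_ne_top μ _ _)
    rw [hg2] at htest
    refine le_trans ?_ htest
    refine ENNReal.rpow_le_rpow (lintegral_mono fun x => ?_) (by norm_num)
    refine ENNReal.rpow_le_rpow ?_ (by norm_num)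
    by_cases hx : x ∈ Q
    · rw [Set.indicator_of_mem hx]
    · rw [Set.indicator_of_notMem hx]
      exact zero_le
  · -- sufficiency
    intro B hB f hf hf2
    set M := dyadicMaxOp μ D f with hMdef
    have hMmeas : Measurable M := measurable_maxOp μ D f
    have hMne : ∀ x, M x ≠ ∞ := maxOp_ne_top μ D f hf hf2
    set F := ∫⁻ x, f x ^ (2:ℝ) ∂μ with hFdef
    set Iν := ∫⁻ x, (M x) ^ (2:ℝ) ∂ν with hIνdef
    -- testing ⇒ per-cube measure bound
    have hν : ∀ k : ℤ, ∀ Q ∈ QF μ D f ((2:ℝ≥0∞)^k), ν Q ≤ (B*B) * μ Q := by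
      intro k Q hQ
      have hμ0 : μ Q ≠ 0 := (QF_props μ D f hQ).2.1
      have hμfin : μ Q ≠ ∞ := (QF_props μ D f hQ).2.2.1
      obtain ⟨hQD, _⟩ := QF_mem μ D f hQ
      obtain ⟨i, hiD, rfl⟩ := (mem_cubesOf D).mp hQD
      set g := (dyadicCube n i.1 i.2).indicator (1 : (Fin n → ℝ) → ℝ≥0∞) with hgdef
      have havg : dyAvg μ g (dyadicCube n i.1 i.2) = 1 := by
        rw [dyAvg, if_neg hμ0]
        have hint : (∫⁻ x in dyadicCube n i.1 i.2, g x ∂μ) = μ (dyadicCube n i.1 i.2) := by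
          rw [setLIntegral_congr_fun (dyadicCube_measurable _ _)
            (fun x hx => by
              rw [hgdef, Set.indicator_of_mem hx, Pi.one_apply]),
            setLIntegral_one]
        rw [hint, ENNReal.div_self hμ0 hμfin]
      have hpt : ∀ x, (dyadicCube n i.1 i.2).indicator (fun _ => (1:ℝ≥0∞)) x ≤
          ((dyadicCube n i.1 i.2).indicator
            (fun y => dyadicMaxOp μ D g y) x) ^ (2:ℝ) := by
        intro x
        by_cases hx : x ∈ dyadicCube n i.1 i.2
        · rw [Set.indicator_of_mem hx, Set.indicator_of_mem hx]
          have h1 : (1:ℝ≥0∞) ≤ dyadicMaxOp μ D g x :=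
            havg ▸ avg_le_maxOp μ D g hiD hx
          calc (1:ℝ≥0∞) = 1 ^ (2:ℝ) := (ENNReal.one_rpow _).symm
            _ ≤ _ := ENNReal.rpow_le_rpow h1 (by norm_num)
        · rw [Set.indicator_of_notMem hx]
          exact zero_le
      have hν1 : ν (dyadicCube n i.1 i.2) ≤
          ∫⁻ x, ((dyadicCube n i.1 i.2).indicator
            (fun y => dyadicMaxOp μ D g y) x) ^ (2:ℝ) ∂ν := by
        calc ν (dyadicCube n i.1 i.2)
            = ∫⁻ x, (dyadicCube n i.1 i.2).indicator (fun _ => (1:ℝ≥0∞)) x ∂ν := by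
              rw [lintegral_indicator (dyadicCube_measurable _ _), setLIntegral_one]
          _ ≤ _ := lintegral_mono hpt
      have htest := hB i hiD
      refine hν1.trans ?_
      set J := ∫⁻ x, ((dyadicCube n i.1 i.2).indicator
        (fun y => dyadicMaxOp μ D g y) x) ^ (2:ℝ) ∂ν with hJdef
      have hJ : J = (J ^ ((1:ℝ)/2)) ^ (2:ℝ) := by
        rw [← ENNReal.rpow_mul]; norm_num
      calc J = (J ^ ((1:ℝ)/2)) ^ (2:ℝ) := hJ
        _ ≤ (B * μ (dyadicCube n i.1 i.2) ^ ((1:ℝ)/2)) ^ (2:ℝ) :=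
            ENNReal.rpow_le_rpow htest (by norm_num)
        _ = B ^ (2:ℝ) * (μ (dyadicCube n i.1 i.2) ^ ((1:ℝ)/2)) ^ (2:ℝ) :=
            ENNReal.mul_rpow_of_nonneg _ _ (by norm_num)
        _ = (B*B) * μ (dyadicCube n i.1 i.2) := by
            rw [← ENNReal.rpow_mul, rpow_two_mul B]
            norm_num
    -- core estimate with a = 2, C = B*B
    have hcore := core_estimate μ D f ν 2 (B*B) (by norm_num) (by norm_num) hf hMne hν
    rw [c2' (B*B)] at hcore
    -- Cauchy–Schwarz and the unweighted bound
    have hCS : (∫⁻ x, f x * M x ∂μ) ≤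
        F ^ ((1:ℝ)/2) * (∫⁻ x, (M x) ^ (2:ℝ) ∂μ) ^ ((1:ℝ)/2) :=
      lintegral_mul_le_sq μ f M hf hMmeas
    have hUW : (∫⁻ x, (M x) ^ (2:ℝ) ∂μ) ^ ((1:ℝ)/2) ≤ (27/4 : ℝ≥0∞) * F ^ ((1:ℝ)/2) :=
      unweighted_L2 μ D f hf hf2
    have hmain : Iν ≤ 54 * ((B*B) * (F ^ ((1:ℝ)/2) * F ^ ((1:ℝ)/2))) := by
      calc Iν ≤ 8 * (B*B) * ∫⁻ x, f x * M x ∂μ := hcore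
        _ ≤ 8 * (B*B) * (F ^ ((1:ℝ)/2) * ((27/4 : ℝ≥0∞) * F ^ ((1:ℝ)/2))) := by
            refine mul_le_mul_right (hCS.trans (mul_le_mul_right hUW _)) _
        _ = (8 * (27/4)) * ((B*B) * (F ^ ((1:ℝ)/2) * F ^ ((1:ℝ)/2))) := by
            ring
        _ = 54 * ((B*B) * (F ^ ((1:ℝ)/2) * F ^ ((1:ℝ)/2))) := by rw [h84]
    calc Iν ^ ((1:ℝ)/2) ≤ (54 * ((B*B) * (F ^ ((1:ℝ)/2) * F ^ ((1:ℝ)/2)))) ^ ((1:ℝ)/2) :=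
          ENNReal.rpow_le_rpow hmain (by norm_num)
      _ = 54 ^ ((1:ℝ)/2) * (((B*B) * (F ^ ((1:ℝ)/2) * F ^ ((1:ℝ)/2))) ^ ((1:ℝ)/2)) :=
          ENNReal.mul_rpow_of_nonneg _ _ (by norm_num)
      _ = 54 ^ ((1:ℝ)/2) * ((B*B) ^ ((1:ℝ)/2) *
            ((F ^ ((1:ℝ)/2) * F ^ ((1:ℝ)/2)) ^ ((1:ℝ)/2))) := by
          rw [ENNReal.mul_rpow_of_nonneg _ _ (by norm_num : (0:ℝ) ≤ (1:ℝ)/2)]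
      _ = ENNReal.ofReal ((27 / 2 : ℝ) ^ ((1 : ℝ) / 2) * 2) * B * F ^ ((1:ℝ)/2) := by
          rw [sq_rpow_half B, sq_rpow_half (F ^ ((1:ℝ)/2)), h54, mul_assoc]
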